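/- Let f : ℝ^D → ℝ be twice continuously differentiable with γ_H-Lipschitz Hessian. Given two distinct points xᵢ, xⱼ ∈ ℝ^D with noisy evaluations zᵢ = f(xᵢ) + εᵢ and zⱼ = f(xⱼ) + εⱼ where |εᵢ| ≤ ε̄ and |εⱼ| ≤ ε̄, the noisy directional slope g̃ᵢⱼ = (zⱼ − zᵢ)/μᵢⱼ satisfies |g̃ᵢⱼ − ⟨∇f(xᵢ), uᵢⱼ⟩| ≤ (1/2)·μᵢⱼ·‖H(xᵢ)‖ + (1/6)·μᵢⱼ²·γ_H + 2ε̄/μᵢⱼ. -/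

import Mathlib

open Set

/-- 1D comparison: if |g'| ≤ B' on ℝ (everywhere differentiable), g 0 = B 0 = 0,
then |g t| ≤ B t for t ∈ [0,1]. -/
lemma abs_le_of_abs_deriv_le {g B g' B' : ℝ → ℝ}
    (hg : ∀ t, HasDerivAt g (g' t) t) (hB : ∀ t, HasDerivAt B (B' t) t)
    (h0 : g 0 = 0) (hB0 : B 0 = 0)
    (hle : ∀ t ∈ Icc (0:ℝ) 1, |g' t| ≤ B' t) :
    ∀ t ∈ Icc (0:ℝ) 1, |g t| ≤ B t := by
  intro t ht
  have hmem : (0:ℝ) ∈ Icc (0:ℝ) 1 := by constructor <;> norm_num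
  have hup : g t - B t ≤ 0 := by
    have hanti : AntitoneOn (fun s => g s - B s) (Icc 0 1) := by
      apply antitoneOn_of_deriv_nonpos (convex_Icc 0 1)
      · have hgc : Continuous g := Differentiable.continuous (fun t => (hg t).differentiableAt)
        have hBc : Continuous B := Differentiable.continuous (fun t => (hB t).differentiableAt)
        exact (hgc.sub hBc).continuousOn
      · intro x _
        exact ((hg x).sub (hB x)).differentiableAt.differentiableWithinAt
      · intro x hx
        rw [interior_Icc] at hx
        rw [show deriv (fun s => g s - B s) x = g' x - B' x from ((hg x).sub (hB x)).deriv]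
        have := hle x ⟨le_of_lt hx.1, le_of_lt hx.2⟩
        have := (abs_le.mp this).2
        linarith
    have := hanti hmem ht ht.1
    simpa [h0, hB0] using this
  have hlo : -(g t) - B t ≤ 0 := by
    have hanti : AntitoneOn (fun s => -(g s) - B s) (Icc 0 1) := by
      apply antitoneOn_of_deriv_nonpos (convex_Icc 0 1)
      · have hgc : Continuous g := Differentiable.continuous (fun t => (hg t).differentiableAt)
        have hBc : Continuous B := Differentiable.continuous (fun t => (hB t).differentiableAt)
        exact (hgc.neg.sub hBc).continuousOn
      · intro x _
        exact (((hg x).neg).sub (hB x)).differentiableAt.differentiableWithinAt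
      · intro x hx
        rw [interior_Icc] at hx
        rw [show deriv (fun s => -g s - B s) x = -g' x - B' x from (((hg x).neg).sub (hB x)).deriv]
        have := hle x ⟨le_of_lt hx.1, le_of_lt hx.2⟩
        have := (abs_le.mp this).1
        linarith
    have := hanti hmem ht ht.1
    simpa [h0, hB0] using this
  rw [abs_le]; constructor <;> linarith

section Taylor

variable {E : Type*} [NormedAddCommGroup E] [InnerProductSpace ℝ E]

/-- Second-order Taylor bound with Lipschitz Hessian. -/
lemma taylor_bound (f : E → ℝ) (hf : ContDiff ℝ 2 f)
    (γH : ℝ)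
    (hLip : ∀ x₁ x₂ : E,
      ‖iteratedFDeriv ℝ 2 f x₁ - iteratedFDeriv ℝ 2 f x₂‖ ≤ γH * ‖x₁ - x₂‖)
    (xi xj : E) :
    |f xj - f xi - fderiv ℝ f xi (xj - xi)| ≤
      (1/2) * ‖xj - xi‖^2 * ‖iteratedFDeriv ℝ 2 f xi‖ + (1/6) * ‖xj - xi‖^3 * γH := by
  set d := xj - xi with hd
  set μ := ‖d‖ with hμ
  set A := ‖iteratedFDeriv ℝ 2 f xi‖ * μ^2 with hA
  set K := γH * μ^3 with hK
  set c : ℝ → E := fun t => xi + t • d with hc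
  have hcd : ∀ t, HasDerivAt c d t := by
    intro t
    exact (((hasDerivAt_id t).smul_const d).const_add xi).congr_deriv (one_smul ℝ d)
  have hc0 : c 0 = xi := by simp [hc]
  have hc1 : c 1 = xj := by simp [hc, hd]
  have hdiff : Differentiable ℝ f := hf.differentiable (by norm_num)
  have hf'cd : ContDiff ℝ 1 (fderiv ℝ f) := hf.fderiv_right (le_refl _)
  set g₁ : ℝ → ℝ := fun t => fderiv ℝ f (c t) d with hg₁def
  set g₂ : ℝ → ℝ := fun t => fderiv ℝ (fderiv ℝ f) (c t) d d with hg₂def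
  have hg : ∀ t, HasDerivAt (fun s => f (c s)) (g₁ t) t := by
    intro t
    exact ((hdiff (c t)).hasFDerivAt).comp_hasDerivAt t (hcd t)
  have hg₁ : ∀ t, HasDerivAt g₁ (g₂ t) t := by
    intro t
    have h1 : HasDerivAt (fun s => fderiv ℝ f (c s)) (fderiv ℝ (fderiv ℝ f) (c t) d) t :=
      (((hf'cd.differentiable (by norm_num)) (c t)).hasFDerivAt).comp_hasDerivAt t (hcd t)
    have h2 := (ContinuousLinearMap.apply ℝ ℝ d).hasFDerivAt.comp_hasDerivAt t h1
    exact h2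
  -- pointwise bound on g₂
  have hH : ∀ x : E, |fderiv ℝ (fderiv ℝ f) x d d| ≤ ‖iteratedFDeriv ℝ 2 f x‖ * μ^2 := by
    intro x
    have : fderiv ℝ (fderiv ℝ f) x d d = iteratedFDeriv ℝ 2 f x ![d, d] := by
      rw [iteratedFDeriv_two_apply]; rfl
    rw [this]
    calc |iteratedFDeriv ℝ 2 f x ![d, d]| ≤ ‖iteratedFDeriv ℝ 2 f x‖ * ∏ i, ‖(![d,d]) i‖ :=
          (iteratedFDeriv ℝ 2 f x).le_opNorm _
      _ = ‖iteratedFDeriv ℝ 2 f x‖ * μ^2 := by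
          simp [Fin.prod_univ_two, sq, hμ]
  have hHdiff : ∀ t ∈ Icc (0:ℝ) 1, |g₂ t - g₂ 0| ≤ K * t := by
    intro t ht
    have heq : g₂ t - g₂ 0 = (iteratedFDeriv ℝ 2 f (c t) - iteratedFDeriv ℝ 2 f (c 0)) ![d,d] := by
      simp only [ContinuousMultilinearMap.sub_apply, g₂]
      rw [iteratedFDeriv_two_apply, iteratedFDeriv_two_apply]
      rfl
    rw [heq]
    calc |(iteratedFDeriv ℝ 2 f (c t) - iteratedFDeriv ℝ 2 f (c 0)) ![d,d]|
        ≤ ‖iteratedFDeriv ℝ 2 f (c t) - iteratedFDeriv ℝ 2 f (c 0)‖ * ∏ i, ‖(![d,d]) i‖ :=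
          (iteratedFDeriv ℝ 2 f (c t) - iteratedFDeriv ℝ 2 f (c 0)).le_opNorm _
      _ ≤ (γH * ‖c t - c 0‖) * (μ * μ) := by
          have := hLip (c t) (c 0)
          have hprod : ∏ i, ‖(![d,d]) i‖ = μ * μ := by simp [Fin.prod_univ_two, hμ]
          rw [hprod]
          exact mul_le_mul_of_nonneg_right this (by positivity)
      _ = K * t := by
          have : ‖c t - c 0‖ = t * μ := by
            simp [hc, hμ, norm_smul, abs_of_nonneg ht.1]
          rw [this, hK]; ring
  have hg₂bound : ∀ t ∈ Icc (0:ℝ) 1, |g₂ t| ≤ A + K * t := by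
    intro t ht
    have h1 := hHdiff t ht
    have h2 : |g₂ 0| ≤ A := by
      have := hH (c 0)
      rw [hc0] at this
      simpa [hg₂def, hc0, hA] using this
    calc |g₂ t| ≤ |g₂ 0| + |g₂ t - g₂ 0| := by
          have := abs_sub_abs_le_abs_sub (g₂ t) (g₂ 0)
          have := abs_add_le (g₂ 0) (g₂ t - g₂ 0)
          calc |g₂ t| = |g₂ 0 + (g₂ t - g₂ 0)| := by ring_nf
            _ ≤ |g₂ 0| + |g₂ t - g₂ 0| := abs_add_le _ _
      _ ≤ A + K * t := add_le_add h2 h1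
  -- first comparison: |g₁ t - g₁ 0| ≤ A t + K t²/2
  have step1 : ∀ t ∈ Icc (0:ℝ) 1, |g₁ t - g₁ 0| ≤ A * t + K * t^2 / 2 := by
    have := abs_le_of_abs_deriv_le (g := fun t => g₁ t - g₁ 0)
      (B := fun t => A * t + K * t^2 / 2) (g' := g₂) (B' := fun t => A + K * t)
      (fun t => (hg₁ t).sub_const (g₁ 0))
      (fun t => by
        have h1 : HasDerivAt (fun t : ℝ => A * t) A t := by
          simpa using (hasDerivAt_id t).const_mul A
        have h2 : HasDerivAt (fun t : ℝ => K * t^2 / 2) (K * t) t := by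
          have := (hasDerivAt_pow 2 t).const_mul K
          have h3 := this.div_const 2
          refine h3.congr_deriv ?_
          rw [show (2:ℕ) - 1 = 1 from rfl]; push_cast; ring
        exact h1.add h2)
      (by simp) (by norm_num) hg₂bound
    exact this
  -- second comparison: |f (c t) - f (c 0) - t * g₁ 0| ≤ A t²/2 + K t³/6
  have step2 : ∀ t ∈ Icc (0:ℝ) 1,
      |f (c t) - f (c 0) - t * g₁ 0| ≤ A * t^2 / 2 + K * t^3 / 6 := by
    have := abs_le_of_abs_deriv_le (g := fun t => f (c t) - f (c 0) - t * g₁ 0)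
      (B := fun t => A * t^2 / 2 + K * t^3 / 6)
      (g' := fun t => g₁ t - g₁ 0) (B' := fun t => A * t + K * t^2 / 2)
      (fun t => by
        have h1 := (hg t).sub_const (f (c 0))
        have h2 : HasDerivAt (fun s : ℝ => s * g₁ 0) (g₁ 0) t := by
          simpa using (hasDerivAt_id t).mul_const (g₁ 0)
        exact h1.sub h2)
      (fun t => by
        have h1 : HasDerivAt (fun t : ℝ => A * t^2 / 2) (A * t) t := by
          have := ((hasDerivAt_pow 2 t).const_mul A).div_const 2
          refine this.congr_deriv ?_; rw [show (2:ℕ) - 1 = 1 from rfl]; push_cast; ring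
        have h2 : HasDerivAt (fun t : ℝ => K * t^3 / 6) (K * t^2 / 2) t := by
          have := ((hasDerivAt_pow 3 t).const_mul K).div_const 6
          refine this.congr_deriv ?_; rw [show (3:ℕ) - 1 = 2 from rfl]; push_cast; ring
        exact h1.add h2)
      (by simp) (by norm_num) step1
    exact this
  have final := step2 1 (by constructor <;> norm_num)
  rw [hc1, hc0] at final
  have : f xj - f xi - fderiv ℝ f xi d = f xj - f xi - 1 * g₁ 0 := by
    simp [hg₁def, hc0]
  rw [hd] at this ⊢
  rw [this]
  calc |f xj - f xi - 1 * g₁ 0| ≤ A * 1^2 / 2 + K * 1^3 / 6 := final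
    _ = (1/2) * ‖xj - xi‖^2 * ‖iteratedFDeriv ℝ 2 f xi‖ + (1/6) * ‖xj - xi‖^3 * γH := by
        rw [hA, hK, hμ, hd]; ring

end Taylor

/-- Accuracy of the two-sample directional slope with bounded
additive noise (Lemma 2 of the paper). -/
theorem sage_directional_slope_accuracy_noisy
    {D : ℕ} (hD : 1 ≤ D)
    (f : EuclideanSpace ℝ (Fin D) → ℝ)
    (hf : ContDiff ℝ 2 f)
    (γH : ℝ) (hγH : 0 ≤ γH)
    (hLip : ∀ x₁ x₂ : EuclideanSpace ℝ (Fin D),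
      ‖iteratedFDeriv ℝ 2 f x₁ - iteratedFDeriv ℝ 2 f x₂‖ ≤ γH * ‖x₁ - x₂‖)
    (xi xj : EuclideanSpace ℝ (Fin D)) (hne : xi ≠ xj)
    (εbar εi εj zi zj : ℝ) (hεbar : 0 ≤ εbar)
    (hzi : zi = f xi + εi) (hzj : zj = f xj + εj)
    (hεi : |εi| ≤ εbar) (hεj : |εj| ≤ εbar) :
    |(zj - zi) / ‖xj - xi‖ -
        (inner ℝ (gradient f xi) ((‖xj - xi‖)⁻¹ • (xj - xi)) : ℝ)| ≤
      (1 / 2) * ‖xj - xi‖ * ‖iteratedFDeriv ℝ 2 f xi‖ +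
        (1 / 6) * ‖xj - xi‖ ^ 2 * γH + 2 * εbar / ‖xj - xi‖ := by
  set d := xj - xi with hd
  have hdne : d ≠ 0 := sub_ne_zero.mpr (Ne.symm hne)
  set μ := ‖d‖ with hμ
  have hμpos : 0 < μ := norm_pos_iff.mpr hdne
  have hgrad : (inner ℝ (gradient f xi) ((μ)⁻¹ • d) : ℝ) = μ⁻¹ * fderiv ℝ f xi d := by
    rw [real_inner_smul_right]
    congr 1
    simp only [gradient]
    exact (InnerProductSpace.toDual_symm_apply (𝕜 := ℝ)
      (E := EuclideanSpace ℝ (Fin D)) (x := d) (y := fderiv ℝ f xi))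
  have hT := taylor_bound f hf γH hLip xi xj
  rw [← hd, ← hμ] at hT
  have hkey : |(zj - zi) / μ - μ⁻¹ * fderiv ℝ f xi d|
      ≤ ((1/2) * μ^2 * ‖iteratedFDeriv ℝ 2 f xi‖ + (1/6) * μ^3 * γH + 2 * εbar) / μ := by
    have heq : (zj - zi) / μ - μ⁻¹ * fderiv ℝ f xi d
        = ((f xj - f xi - fderiv ℝ f xi d) + εj + (-εi)) / μ := by
      rw [hzi, hzj]; field_simp; ring
    rw [heq, abs_div, abs_of_pos hμpos]
    gcongr
    calc |(f xj - f xi - fderiv ℝ f xi d) + εj + (-εi)|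
        ≤ |f xj - f xi - fderiv ℝ f xi d| + |εj| + |(-εi)| := abs_add_three _ _ _
      _ ≤ ((1/2) * μ^2 * ‖iteratedFDeriv ℝ 2 f xi‖ + (1/6) * μ^3 * γH) + εbar + εbar := by
          refine add_le_add (add_le_add hT hεj) ?_
          simpa using hεi
      _ = (1/2) * μ^2 * ‖iteratedFDeriv ℝ 2 f xi‖ + (1/6) * μ^3 * γH + 2 * εbar := by ring
  rw [hgrad]
  refine hkey.trans_eq ?_
  field_simp
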